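/- Let G be a maximal nontraceable graph and let Q be a path in G. If the subgraph of G induced by the vertex set of Q is not a complete graph, then some internal vertex of Q (a vertex of Q other than its two endvertices) has a neighbour in G outside the vertex set of Q. -/

import Mathlib

open SimpleGraph

/-- A graph is traceable if it has a Hamiltonian path, i.e. a path containing
all the vertices of the graph. -/
def Traceable {V : Type*} (G : SimpleGraph V) : Prop :=
  ∃ (u v : V) (p : G.Walk u v), p.IsPath ∧ ∀ w, w ∈ p.support

/-- A graph is maximal nontraceable if it is not traceable, but adding any edge
of the complement produces a traceable graph. -/
def MaxNontraceable {V : Type*} (G : SimpleGraph V) : Prop :=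
  ¬ Traceable G ∧ ∀ u v : V, u ≠ v → ¬ G.Adj u v → Traceable (G ⊔ SimpleGraph.edge u v)

section Aux

variable {V : Type*}

private lemma chain'_rev {G : SimpleGraph V} {l : List V} (h : l.Chain' G.Adj) :
    l.reverse.Chain' G.Adj :=
  List.isChain_reverse.mpr (List.IsChain.imp (fun _ _ hab => hab.symm) h)

private lemma nodup_app {l1 l2 : List V} (h1 : l1.Nodup) (h2 : l2.Nodup)
    (h : ∀ x ∈ l1, x ∉ l2) : (l1 ++ l2).Nodup :=
  List.nodup_append'.mpr ⟨h1, h2, fun a ha hb => h a ha hb⟩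

private lemma nodup3 {l1 l2 l3 : List V} (h : (l1 ++ l2 ++ l3).Nodup) :
    l1.Nodup ∧ l2.Nodup ∧ l3.Nodup ∧ (∀ x ∈ l1, x ∉ l2) ∧ (∀ x ∈ l1, x ∉ l3) ∧
      (∀ x ∈ l2, x ∉ l3) := by
  rw [List.nodup_append'] at h
  obtain ⟨h12, h3, hd⟩ := h
  rw [List.nodup_append'] at h12
  obtain ⟨h1, h2, hd'⟩ := h12
  refine ⟨h1, h2, h3, fun x hx => hd' hx, fun x hx hx3 => hd (by simp [hx]) hx3,
    fun x hx hx3 => hd (by simp [hx]) hx3⟩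

private lemma mem_of_getLast? {l : List V} {x : V} (h : l.getLast? = some x) : x ∈ l := by
  obtain ⟨h', rfl⟩ := List.mem_getLast?_eq_getLast (Option.mem_def.mpr h)
  exact List.getLast_mem _

private lemma mem_some {α : Type*} {x y : α} (h : x ∈ (some y : Option α)) : x = y :=
  (Option.some.inj (Option.mem_def.mp h)).symm

private lemma eq_singleton_of_hl {l : List V} {x : V} (hnd : l.Nodup)
    (h1 : l.head? = some x) (h2 : l.getLast? = some x) : l = [x] := by
  cases l with
  | nil => simp at h1
  | cons y t =>
    have hyx : y = x := by simpa using h1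
    subst hyx
    cases t with
    | nil => rfl
    | cons z t' =>
      exfalso
      have hy : y ∈ z :: t' := by
        rw [List.getLast?_cons_cons] at h2
        exact mem_of_getLast? h2
      exact (List.nodup_cons.mp hnd).1 hy

private lemma exists_walk_of_chain (G : SimpleGraph V) :
    ∀ l : List V, l.Chain' G.Adj → l ≠ [] → ∃ s t : V, ∃ w : G.Walk s t, w.support = l := by
  intro l
  induction l with
  | nil => intro _ h; exact absurd rfl h
  | cons x t ih =>
    intro hch _
    cases t with
    | nil => exact ⟨x, x, Walk.nil, rfl⟩
    | cons y t' =>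
      obtain ⟨hxy, h'⟩ := List.isChain_cons_cons.mp hch
      obtain ⟨s, t2, w, hw⟩ := ih h' (by simp)
      have hs : s = y := by
        have h2 := w.support_eq_cons
        rw [hw] at h2
        exact (List.cons.injEq _ _ _ _).mp h2 |>.1.symm
      subst hs
      exact ⟨x, t2, Walk.cons hxy w, by simp [hw]⟩

private lemma traceable_of_list (G : SimpleGraph V) (l : List V) (hne : l ≠ [])
    (hch : l.Chain' G.Adj) (hnd : l.Nodup) (hall : ∀ x, x ∈ l) : Traceable G := by
  obtain ⟨s, t, w, hw⟩ := exists_walk_of_chain G l hch hne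
  exact ⟨s, t, w, by rw [Walk.isPath_def, hw]; exact hnd, fun x => by rw [hw]; exact hall x⟩

private lemma chain_split (G : SimpleGraph V) (a b : V) :
    ∀ L : List V, L.Chain' (G ⊔ edge a b).Adj →
      L.Chain' G.Adj ∨ ∃ x y L1 L2, L = L1 ++ x :: y :: L2 ∧
        ((x = a ∧ y = b) ∨ (x = b ∧ y = a)) := by
  intro L
  induction L with
  | nil => intro _; left; exact List.isChain_nil
  | cons p t ih =>
    intro h
    cases t with
    | nil => left; exact List.isChain_singleton _
    | cons q t' =>
      obtain ⟨hpq, h'⟩ := List.isChain_cons_cons.mp h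
      rcases ih h' with hg | ⟨x, y, L1, L2, hEq, hxy⟩
      · rcases (sup_adj _ _ _ _).mp hpq with hG | hE
        · left; exact List.isChain_cons_cons.mpr ⟨hG, hg⟩
        · right
          refine ⟨p, q, [], t', rfl, ?_⟩
          exact ((edge_adj a b p q).mp hE).1
      · right
        exact ⟨x, y, p :: L1, L2, by rw [hEq]; rfl, hxy⟩

private lemma chain_of_not_mem (G : SimpleGraph V) (a b : V) :
    ∀ K : List V, K.Chain' (G ⊔ edge a b).Adj → (a ∉ K ∨ b ∉ K) → K.Chain' G.Adj := by
  intro K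
  induction K with
  | nil => intro _ _; exact List.isChain_nil
  | cons p t ih =>
    intro h hm
    cases t with
    | nil => exact List.isChain_singleton _
    | cons q t' =>
      obtain ⟨hpq, h'⟩ := List.isChain_cons_cons.mp h
      have hm' : a ∉ q :: t' ∨ b ∉ q :: t' := by
        rcases hm with h1 | h1
        · exact Or.inl fun hx => h1 (List.mem_cons_of_mem _ hx)
        · exact Or.inr fun hx => h1 (List.mem_cons_of_mem _ hx)
      refine List.isChain_cons_cons.mpr ⟨?_, ih h' hm'⟩
      rcases (sup_adj _ _ _ _).mp hpq with hG | hE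
      · exact hG
      · exfalso
        obtain ⟨hor, -⟩ := (edge_adj a b p q).mp hE
        rcases hor with ⟨rfl, rfl⟩ | ⟨rfl, rfl⟩
        · rcases hm with h1 | h1
          · exact h1 (by simp)
          · exact h1 (by simp)
        · rcases hm with h1 | h1
          · exact h1 (by simp)
          · exact h1 (by simp)

private lemma decomp (G : SimpleGraph V) (qs : List V) (u v : V)
    (hTW : ∀ x ∈ qs, x ≠ u → x ≠ v → ∀ y, G.Adj x y → y ∈ qs) :
    ∀ D : List V, D.Chain' G.Adj → (∀ x ∈ D.head?, x ∈ qs) →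
      (∀ x ∈ D, x ∈ qs) ∨
      ∃ σ ω R, D = σ ++ ω ++ R ∧ σ ≠ [] ∧ ω ≠ [] ∧
        (∀ x ∈ σ, x ∈ qs) ∧ (∀ x ∈ ω, x ∉ qs) ∧
        (σ.getLast? = some u ∨ σ.getLast? = some v) ∧
        (∀ g ∈ σ.getLast?, ∀ h ∈ ω.head?, G.Adj g h) ∧
        ω.Chain' G.Adj ∧ R.Chain' G.Adj ∧
        (∀ r ∈ R.head?, r ∈ qs ∧ (r = u ∨ r = v) ∧ ∀ g ∈ ω.getLast?, G.Adj g r) := by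
  classical
  intro D hch hhd
  set pS : V → Bool := fun x => decide (x ∈ qs) with hpS
  set pW : V → Bool := fun x => decide (x ∉ qs) with hpW
  by_cases hrest : D.dropWhile pS = []
  · left
    intro x hx
    have hTD : D.takeWhile pS = D := by
      have h := List.takeWhile_append_dropWhile (p := pS) (l := D)
      rwa [hrest, List.append_nil] at h
    have := List.mem_takeWhile_imp (hTD.symm ▸ hx)
    simpa [hpS] using this
  · right
    set σ := D.takeWhile pS with hσdef
    set rest := D.dropWhile pS with hrestdef
    set ω := rest.takeWhile pW with hωdef
    set R := rest.dropWhile pW with hRdef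
    have hDne : D ≠ [] := by
      intro h
      exact hrest (by rw [hrestdef, h]; simp)
    have hDcons : D.head hDne :: D.tail = D := List.cons_head_tail hDne
    have hdqs : D.head hDne ∈ qs := hhd _ (List.head?_eq_head hDne)
    have hpSd : pS (D.head hDne) = true := by simp [hpS, hdqs]
    have hσne : σ ≠ [] := by
      rw [hσdef, ← hDcons, List.takeWhile_cons, hpSd]
      simp
    have hr0 : pS (rest.head hrest) = false := List.head_dropWhile_not pS hrest
    have hr0' : rest.head hrest ∉ qs := by simpa [hpS] using hr0
    have hpWr : pW (rest.head hrest) = true := by simp [hpW, hr0']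
    have hωne : ω ≠ [] := by
      rw [hωdef, ← List.cons_head_tail hrest, List.takeWhile_cons, hpWr]
      simp
    have hσS : ∀ x ∈ σ, x ∈ qs := fun x hx => by
      simpa [hpS] using List.mem_takeWhile_imp hx
    have hωW : ∀ x ∈ ω, x ∉ qs := fun x hx => by
      simpa [hpW] using List.mem_takeWhile_imp hx
    have hDeq : D = σ ++ (ω ++ R) := by
      rw [hωdef, hRdef, List.takeWhile_append_dropWhile, hσdef, hrestdef,
        List.takeWhile_append_dropWhile]
    have hch2 : (σ ++ (ω ++ R)).Chain' G.Adj := hDeq ▸ hch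
    obtain ⟨hσch, hrest2, j1⟩ := List.isChain_append.mp hch2
    obtain ⟨hωch, hRch, j2⟩ := List.isChain_append.mp hrest2
    have j1' : ∀ g ∈ σ.getLast?, ∀ h ∈ ω.head?, G.Adj g h := by
      intro g hg h hh
      refine j1 g hg h ?_
      rw [List.head?_append_of_ne_nil _ hωne]
      exact hh
    have hadj : G.Adj (σ.getLast hσne) (ω.head hωne) :=
      j1' _ (List.getLast_mem_getLast? hσne) _ (List.head?_eq_head hωne)
    have hgqs : σ.getLast hσne ∈ qs := hσS _ (List.getLast_mem hσne)
    have hhnqs : ω.head hωne ∉ qs := hωW _ (List.head_mem hωne)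
    have hglast : σ.getLast hσne = u ∨ σ.getLast hσne = v := by
      by_contra hcc
      push_neg at hcc
      exact hhnqs (hTW _ hgqs hcc.1 hcc.2 _ hadj)
    have he : σ.getLast? = some u ∨ σ.getLast? = some v := by
      rw [List.getLast?_eq_getLast hσne]
      rcases hglast with h | h <;> simp [h]
    have hRfact : ∀ r ∈ R.head?, r ∈ qs ∧ (r = u ∨ r = v) ∧ ∀ g ∈ ω.getLast?, G.Adj g r := by
      intro r hr
      have hRne : R ≠ [] := by
        intro h
        rw [h] at hr
        simp at hr
      have hrhead : R.head hRne = r := by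
        have h2 := List.head?_eq_head hRne
        rw [hr] at h2
        exact (Option.some.inj h2).symm
      have hpWrr : pW (R.head hRne) = false := List.head_dropWhile_not pW hRne
      have hrqs : r ∈ qs := by
        rw [← hrhead]
        simpa [hpW] using hpWrr
      have hadj2 : ∀ g ∈ ω.getLast?, G.Adj g r := fun g hg => j2 g hg r hr
      have hadj3 : G.Adj (ω.getLast hωne) r := hadj2 _ (List.getLast_mem_getLast? hωne)
      have hwlnqs : ω.getLast hωne ∉ qs := hωW _ (List.getLast_mem hωne)
      refine ⟨hrqs, ?_, hadj2⟩
      by_contra hcc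
      push_neg at hcc
      exact hwlnqs (hTW r hrqs hcc.1 hcc.2 _ hadj3.symm)
    exact ⟨σ, ω, R, by rw [List.append_assoc]; exact hDeq, hσne, hωne, hσS, hωW, he, j1',
      hωch, hRch, hRfact⟩

private lemma core_two (G : SimpleGraph V) (u v : V) (qs : List V)
    (hqch : qs.Chain' G.Adj) (hqnd : qs.Nodup) (hqh : qs.head? = some u)
    (hql : qs.getLast? = some v)
    (killer : ∀ M : List V, M.Chain' G.Adj → M.Nodup → (∀ x, x ∈ M) → False)
    (A B : List V) (hAnd : A.Nodup) (hBnd : B.Nodup)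
    (hdisj : ∀ x, x ∈ A → x ∈ B → False)
    (hcover : ∀ x, x ∈ A ∨ x ∈ B)
    (σ1 ω1 R1 : List V) (hAeq : A = σ1 ++ ω1 ++ R1)
    (hσ1S : ∀ x ∈ σ1, x ∈ qs) (hω1W : ∀ x ∈ ω1, x ∉ qs)
    (hjunc1 : ∀ g ∈ σ1.getLast?, ∀ h ∈ ω1.head?, G.Adj g h)
    (hω1ch : ω1.Chain' G.Adj)
    (hR1 : ∀ r ∈ R1.head?, r = u ∨ r = v)
    (he1 : σ1.getLast? = some u)
    (σ2 ω2 R2 : List V) (hBeq : B = σ2 ++ ω2 ++ R2)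
    (hσ2S : ∀ x ∈ σ2, x ∈ qs) (hω2W : ∀ x ∈ ω2, x ∉ qs)
    (hjunc2 : ∀ g ∈ σ2.getLast?, ∀ h ∈ ω2.head?, G.Adj g h)
    (hω2ch : ω2.Chain' G.Adj)
    (hR2 : ∀ r ∈ R2.head?, r = u ∨ r = v)
    (he2 : σ2.getLast? = some v) : False := by
  obtain ⟨hσ1nd, hω1nd, hR1nd, d11, d12, d13⟩ := nodup3 (hAeq ▸ hAnd)
  obtain ⟨hσ2nd, hω2nd, hR2nd, d21, d22, d23⟩ := nodup3 (hBeq ▸ hBnd)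
  have huσ1 : u ∈ σ1 := mem_of_getLast? he1
  have hvσ2 : v ∈ σ2 := mem_of_getLast? he2
  -- R1 = []
  have hR1nil : R1 = [] := by
    cases hR : R1 with
    | nil => rfl
    | cons r R1' =>
      exfalso
      have hrm : r ∈ R1.head? := by rw [hR]; rfl
      rcases hR1 r hrm with h | h
      · exact d12 u huσ1 (by rw [hR, h]; simp)
      · refine hdisj r ?_ ?_
        · rw [hAeq, hR]; simp
        · have hr2 : r ∈ σ2 := by rw [h]; exact hvσ2
          rw [hBeq]; simp [hr2]
  have hR2nil : R2 = [] := by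
    cases hR : R2 with
    | nil => rfl
    | cons r R2' =>
      exfalso
      have hrm : r ∈ R2.head? := by rw [hR]; rfl
      rcases hR2 r hrm with h | h
      · refine hdisj r ?_ ?_
        · have hr1 : r ∈ σ1 := by rw [h]; exact huσ1
          rw [hAeq]; simp [hr1]
        · rw [hBeq, hR]; simp
      · exact d22 v hvσ2 (by rw [hR, h]; simp)
  rw [hR1nil, List.append_nil] at hAeq
  rw [hR2nil, List.append_nil] at hBeq
  -- the Hamiltonian list of G
  set M : List V := ω1.reverse ++ (qs ++ ω2) with hM
  have hqsne : qs ≠ [] := by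
    intro h; rw [h] at hqh; simp at hqh
  have hMch : M.Chain' G.Adj := by
    refine List.IsChain.append (chain'_rev hω1ch) (List.IsChain.append hqch hω2ch ?_) ?_
    · intro x hx y hy
      rw [hql] at hx
      have hxv : x = v := mem_some hx
      rw [hxv]
      exact hjunc2 v he2 y hy
    · intro x hx y hy
      rw [List.getLast?_reverse] at hx
      rw [List.head?_append_of_ne_nil _ hqsne, hqh] at hy
      have hyu : y = u := mem_some hy
      rw [hyu]
      exact (hjunc1 u he1 x hx).symm
  have hMnd : M.Nodup := by
    refine nodup_app (List.nodup_reverse.mpr hω1nd) (nodup_app hqnd hω2nd ?_) ?_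
    · intro x hx hx2
      exact hω2W x hx2 hx
    · intro x hx hx2
      have hx1 : x ∈ ω1 := List.mem_reverse.mp hx
      rcases List.mem_append.mp hx2 with h | h
      · exact hω1W x hx1 h
      · exact hdisj x (by rw [hAeq]; simp [hx1]) (by rw [hBeq]; simp [h])
  have hMall : ∀ x, x ∈ M := by
    intro x
    rcases hcover x with hx | hx
    · rw [hAeq] at hx
      rcases List.mem_append.mp hx with h | h
      · exact by simp [hM, hσ1S x h]
      · exact by simp [hM, h]
    · rw [hBeq] at hx
      rcases List.mem_append.mp hx with h | h
      · exact by simp [hM, hσ2S x h]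
      · exact by simp [hM, h]
  exact killer M hMch hMnd hMall

private lemma core_one (G : SimpleGraph V) (u v : V) (qs : List V)
    (hqch : qs.Chain' G.Adj) (hqnd : qs.Nodup) (hqh : qs.head? = some u)
    (hql : qs.getLast? = some v) (huv : u ≠ v)
    (hTW : ∀ x ∈ qs, x ≠ u → x ≠ v → ∀ y, G.Adj x y → y ∈ qs)
    (killer : ∀ M : List V, M.Chain' G.Adj → M.Nodup → (∀ x, x ∈ M) → False)
    (A B : List V) (hAnd : A.Nodup)
    (hdisj : ∀ x, x ∈ A → x ∈ B → False)
    (hcover : ∀ x, x ∈ A ∨ x ∈ B)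
    (hBS : ∀ x ∈ B, x ∈ qs)
    (σ1 ω1 R1 : List V) (hAeq : A = σ1 ++ ω1 ++ R1)
    (hσ1ne : σ1 ≠ []) (hω1ne : ω1 ≠ [])
    (hσ1S : ∀ x ∈ σ1, x ∈ qs) (hω1W : ∀ x ∈ ω1, x ∉ qs)
    (hjunc1 : ∀ g ∈ σ1.getLast?, ∀ h ∈ ω1.head?, G.Adj g h)
    (hω1ch : ω1.Chain' G.Adj) (hR1ch : R1.Chain' G.Adj)
    (hR1 : ∀ r ∈ R1.head?, r ∈ qs ∧ (r = u ∨ r = v) ∧ ∀ g ∈ ω1.getLast?, G.Adj g r)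
    (he1 : σ1.getLast? = some u) : False := by
  obtain ⟨hσ1nd, hω1nd, hR1nd, d11, d12, d13⟩ := nodup3 (hAeq ▸ hAnd)
  have huσ1 : u ∈ σ1 := mem_of_getLast? he1
  rcases decomp G qs u v hTW R1 hR1ch (fun r hr => (hR1 r hr).1) with hR1S |
    ⟨σ2, ω2, R2, hR1eq, hσ2ne, hω2ne, hσ2S, hω2W, he2or, hjunc2, hω2ch, hR2ch, hR2⟩
  · -- R1 entirely inside qs : M = qs.reverse ++ ω1
    set M : List V := qs.reverse ++ ω1 with hM
    have hMch : M.Chain' G.Adj := by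
      refine List.IsChain.append (chain'_rev hqch) hω1ch ?_
      intro x hx y hy
      rw [List.getLast?_reverse, hqh] at hx
      have hxu : x = u := mem_some hx
      rw [hxu]
      exact hjunc1 u he1 y hy
    have hMnd : M.Nodup := by
      refine nodup_app (List.nodup_reverse.mpr hqnd) hω1nd ?_
      intro x hx hx2
      exact hω1W x hx2 (List.mem_reverse.mp hx)
    have hMall : ∀ x, x ∈ M := by
      intro x
      rcases hcover x with hx | hx
      · rw [hAeq] at hx
        rcases List.mem_append.mp hx with h | h
        · rcases List.mem_append.mp h with h' | h'
          · simp [hM, hσ1S x h']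
          · simp [hM, h']
        · simp [hM, hR1S x h]
      · simp [hM, hBS x hx]
    exact killer M hMch hMnd hMall
  · -- deep case : R1 = σ2 ++ ω2 ++ R2
    obtain ⟨hσ2nd, hω2nd, hR2nd, d21, d22, d23⟩ := nodup3 (hR1eq ▸ hR1nd)
    have hR1ne : R1 ≠ [] := by
      rw [hR1eq]
      intro h
      rcases List.append_eq_nil_iff.mp h with ⟨h1, -⟩
      exact hσ2ne (List.append_eq_nil_iff.mp h1).1
    have hR1h : R1.head? = σ2.head? := by
      rw [hR1eq, List.append_assoc, List.head?_append_of_ne_nil _ hσ2ne]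
    have hσ2h : σ2.head? = some v := by
      have hσ2ne' := hσ2ne
      have hsh := List.head?_eq_head hσ2ne
      have hmem : σ2.head hσ2ne ∈ R1.head? := by rw [hR1h]; exact hsh
      obtain ⟨-, hor, -⟩ := hR1 _ hmem
      rcases hor with h | h
      · exfalso
        refine d12 u huσ1 ?_
        rw [hR1eq]
        have : σ2.head hσ2ne ∈ σ2 := List.head_mem hσ2ne
        rw [h] at this
        simp [this]
      · rw [hsh, h]
    have he2 : σ2.getLast? = some v := by
      rcases he2or with h | h
      · exfalso
        refine d12 u huσ1 ?_
        have : u ∈ σ2 := mem_of_getLast? h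
        rw [hR1eq]
        simp [this]
      · exact h
    have hσ2single : σ2 = [v] := eq_singleton_of_hl hσ2nd hσ2h he2
    have hR2nil : R2 = [] := by
      cases hR : R2 with
      | nil => rfl
      | cons r R2' =>
        exfalso
        have hrm : r ∈ R2.head? := by rw [hR]; rfl
        obtain ⟨-, hor, -⟩ := hR2 r hrm
        rcases hor with h | h
        · refine d12 u huσ1 ?_
          rw [hR1eq, hR, h]
          simp
        · refine d22 r ?_ ?_
          · rw [hσ2single, h]; simp
          · rw [hR]; simp
    have hR1eq' : R1 = v :: ω2 := by
      rw [hR1eq, hσ2single, hR2nil]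
      simp
    -- adjacency of ω1.getLast with v
    have hvR1h : v ∈ R1.head? := by rw [hR1h, hσ2h]; rfl
    obtain ⟨-, -, hadjω1v⟩ := hR1 v hvR1h
    -- qs = qs.dropLast ++ [v]
    have hqsne : qs ≠ [] := by intro h; rw [h] at hqh; simp at hqh
    have hqsplit : qs.dropLast ++ [v] = qs := List.dropLast_append_getLast? v hql
    have hqdne : qs.dropLast ≠ [] := by
      intro h
      rw [h, List.nil_append] at hqsplit
      rw [← hqsplit] at hqh
      simp at hqh
      exact huv hqh.symm
    have hqdh : qs.dropLast.head? = some u := by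
      have := hqh
      rw [← hqsplit, List.head?_append_of_ne_nil _ hqdne] at this
      exact this
    have hqdch : qs.dropLast.Chain' G.Adj := by
      have := hqch
      rw [← hqsplit] at this
      exact List.IsChain.left_of_append this
    have hqdnd : qs.dropLast.Nodup := hqnd.sublist (List.dropLast_prefix qs).sublist
    have hvnqd : v ∉ qs.dropLast := by
      have := hqnd
      rw [← hqsplit] at this
      obtain ⟨-, -, hd⟩ := List.nodup_append'.mp this
      intro hv
      exact hd hv (by simp)
    have hqdsub : ∀ x ∈ qs.dropLast, x ∈ qs := fun x hx =>
      (List.dropLast_prefix qs).sublist.mem hx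
    -- M = ω2.reverse ++ [v] ++ ω1.reverse ++ qs.dropLast
    set M : List V := ω2.reverse ++ ([v] ++ (ω1.reverse ++ qs.dropLast)) with hM
    have hω1rne : ω1.reverse ≠ [] := by simpa using hω1ne
    have hMch : M.Chain' G.Adj := by
      refine List.IsChain.append (chain'_rev hω2ch) ?_ ?_
      · refine List.IsChain.append (List.isChain_singleton v)
          (List.IsChain.append (chain'_rev hω1ch) hqdch ?_) ?_
        · intro x hx y hy
          rw [List.getLast?_reverse] at hx
          rw [hqdh] at hy
          have hyu : y = u := mem_some hy
          rw [hyu]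
          exact (hjunc1 u he1 x hx).symm
        · intro x hx y hy
          have hxv : x = v := mem_some (by simpa using hx)
          rw [List.head?_append_of_ne_nil _ hω1rne, List.head?_reverse] at hy
          rw [hxv]
          exact (hadjω1v y hy).symm
      · intro x hx y hy
        rw [List.getLast?_reverse] at hx
        rw [List.head?_append_of_ne_nil _ (by simp : ([v] : List V) ≠ [])] at hy
        have hyv : y = v := mem_some (by simpa using hy)
        rw [hyv]
        exact (hjunc2 v he2 x hx).symm
    have hω2subR1 : ∀ x ∈ ω2, x ∈ R1 := by
      intro x hx
      rw [hR1eq']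
      simp [hx]
    have hMnd : M.Nodup := by
      refine nodup_app (List.nodup_reverse.mpr hω2nd) ?_ ?_
      · refine nodup_app (List.nodup_singleton v) ?_ ?_
        · refine nodup_app (List.nodup_reverse.mpr hω1nd) hqdnd ?_
          intro x hx hx2
          exact hω1W x (List.mem_reverse.mp hx) (hqdsub x hx2)
        · intro x hx hx2
          have hxv : x = v := by simpa using hx
          rw [hxv] at hx2
          rcases List.mem_append.mp hx2 with h | h
          · exact hω1W v (List.mem_reverse.mp h) (mem_of_getLast? hql)
          · exact hvnqd h
      · intro x hx hx2
        have hx' : x ∈ ω2 := List.mem_reverse.mp hx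
        rcases List.mem_append.mp hx2 with h | h
        · have hxv : x = v := by simpa using h
          rw [hxv] at hx'
          exact hω2W v hx' (mem_of_getLast? hql)
        · rcases List.mem_append.mp h with h' | h'
          · exact d13 x (List.mem_reverse.mp h') (hω2subR1 x hx')
          · exact hω2W x hx' (hqdsub x h')
    have hMall : ∀ x, x ∈ M := by
      have hqsM : ∀ x ∈ qs, x ∈ M := by
        intro x hx
        rw [← hqsplit] at hx
        rcases List.mem_append.mp hx with h | h
        · simp [hM, h]
        · have : x = v := by simpa using h
          subst this
          simp [hM]
      intro x
      rcases hcover x with hx | hx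
      · rw [hAeq] at hx
        rcases List.mem_append.mp hx with h | h
        · rcases List.mem_append.mp h with h' | h'
          · exact hqsM x (hσ1S x h')
          · simp [hM, h']
        · rw [hR1eq'] at h
          rcases List.mem_cons.mp h with rfl | h'
          · simp [hM]
          · simp [hM, h']
      · exact hqsM x (hBS x hx)
    exact killer M hMch hMnd hMall

private lemma core (G : SimpleGraph V) (u v : V) (qs : List V)
    (hqch : qs.Chain' G.Adj) (hqnd : qs.Nodup) (hqh : qs.head? = some u)
    (hql : qs.getLast? = some v) (huv : u ≠ v)
    (hTW : ∀ x ∈ qs, x ≠ u → x ≠ v → ∀ y, G.Adj x y → y ∈ qs)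
    (killer : ∀ M : List V, M.Chain' G.Adj → M.Nodup → (∀ x, x ∈ M) → False)
    (hW : ∃ w, w ∉ qs)
    (A B : List V) (hAch : A.Chain' G.Adj) (hBch : B.Chain' G.Adj)
    (hAnd : A.Nodup) (hBnd : B.Nodup)
    (hdisj : ∀ x, x ∈ A → x ∈ B → False)
    (hcover : ∀ x, x ∈ A ∨ x ∈ B)
    (hAh : ∀ x ∈ A.head?, x ∈ qs) (hBh : ∀ x ∈ B.head?, x ∈ qs) : False := by
  -- reversed data for u/v symmetry
  have hqch' : qs.reverse.Chain' G.Adj := chain'_rev hqch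
  have hqnd' : qs.reverse.Nodup := List.nodup_reverse.mpr hqnd
  have hqh' : qs.reverse.head? = some v := by rw [List.head?_reverse]; exact hql
  have hql' : qs.reverse.getLast? = some u := by rw [List.getLast?_reverse]; exact hqh
  have hTW' : ∀ x ∈ qs.reverse, x ≠ v → x ≠ u → ∀ y, G.Adj x y → y ∈ qs.reverse := by
    intro x hx h1 h2 y hy
    exact List.mem_reverse.mpr (hTW x (List.mem_reverse.mp hx) h2 h1 y hy)
  rcases decomp G qs u v hTW A hAch hAh with hAS |
    ⟨σ1, ω1, R1, hAeq, hσ1ne, hω1ne, hσ1S, hω1W, he1or, hjunc1, hω1ch, hR1ch, hR1⟩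
  · rcases decomp G qs u v hTW B hBch hBh with hBS |
      ⟨σ1, ω1, R1, hBeq, hσ1ne, hω1ne, hσ1S, hω1W, he1or, hjunc1, hω1ch, hR1ch, hR1⟩
    · obtain ⟨w, hw⟩ := hW
      rcases hcover w with h | h
      · exact hw (hAS w h)
      · exact hw (hBS w h)
    · -- B decomposes, A all in qs
      have hdisj' : ∀ x, x ∈ B → x ∈ A → False := fun x hx hy => hdisj x hy hx
      have hcover' : ∀ x, x ∈ B ∨ x ∈ A := fun x => (hcover x).symm
      rcases he1or with he1 | he1
      · exact core_one G u v qs hqch hqnd hqh hql huv hTW killer B A hBnd hdisj' hcover'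
          hAS σ1 ω1 R1 hBeq hσ1ne hω1ne hσ1S hω1W hjunc1 hω1ch hR1ch hR1 he1
      · refine core_one G v u qs.reverse hqch' hqnd' hqh' hql' huv.symm hTW' killer B A hBnd
          hdisj' hcover' (fun x hx => List.mem_reverse.mpr (hAS x hx)) σ1 ω1 R1 hBeq hσ1ne hω1ne
          (fun x hx => List.mem_reverse.mpr (hσ1S x hx))
          (fun x hx => by simpa using hω1W x hx) hjunc1 hω1ch hR1ch ?_ he1
        intro r hr
        obtain ⟨h1, h2, h3⟩ := hR1 r hr
        exact ⟨List.mem_reverse.mpr h1, h2.symm, h3⟩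
  · rcases decomp G qs u v hTW B hBch hBh with hBS |
      ⟨σ2, ω2, R2, hBeq, hσ2ne, hω2ne, hσ2S, hω2W, he2or, hjunc2, hω2ch, hR2ch, hR2⟩
    · -- A decomposes, B all in qs
      rcases he1or with he1 | he1
      · exact core_one G u v qs hqch hqnd hqh hql huv hTW killer A B hAnd hdisj hcover
          hBS σ1 ω1 R1 hAeq hσ1ne hω1ne hσ1S hω1W hjunc1 hω1ch hR1ch hR1 he1
      · refine core_one G v u qs.reverse hqch' hqnd' hqh' hql' huv.symm hTW' killer A B hAnd
          hdisj hcover (fun x hx => List.mem_reverse.mpr (hBS x hx)) σ1 ω1 R1 hAeq hσ1ne hω1ne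
          (fun x hx => List.mem_reverse.mpr (hσ1S x hx))
          (fun x hx => by simpa using hω1W x hx) hjunc1 hω1ch hR1ch ?_ he1
        intro r hr
        obtain ⟨h1, h2, h3⟩ := hR1 r hr
        exact ⟨List.mem_reverse.mpr h1, h2.symm, h3⟩
    · -- both decompose
      have hgAmem : ∀ x, σ1.getLast? = some x → x ∈ A := by
        intro x hx
        rw [hAeq]
        have := mem_of_getLast? hx
        simp [this]
      have hgBmem : ∀ x, σ2.getLast? = some x → x ∈ B := by
        intro x hx
        rw [hBeq]
        have := mem_of_getLast? hx
        simp [this]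
      rcases he1or with he1 | he1 <;> rcases he2or with he2 | he2
      · exact hdisj u (hgAmem u he1) (hgBmem u he2)
      · exact core_two G u v qs hqch hqnd hqh hql killer A B hAnd hBnd hdisj hcover
          σ1 ω1 R1 hAeq hσ1S hω1W hjunc1 hω1ch (fun r hr => (hR1 r hr).2.1) he1
          σ2 ω2 R2 hBeq hσ2S hω2W hjunc2 hω2ch (fun r hr => (hR2 r hr).2.1) he2
      · refine core_two G v u qs.reverse hqch' hqnd' hqh' hql' killer A B hAnd hBnd hdisj hcover
          σ1 ω1 R1 hAeq (fun x hx => List.mem_reverse.mpr (hσ1S x hx))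
          (fun x hx => by simpa using hω1W x hx) hjunc1 hω1ch
          (fun r hr => ((hR1 r hr).2.1).symm) he1
          σ2 ω2 R2 hBeq (fun x hx => List.mem_reverse.mpr (hσ2S x hx))
          (fun x hx => by simpa using hω2W x hx) hjunc2 hω2ch
          (fun r hr => ((hR2 r hr).2.1).symm) he2
      · exact hdisj v (hgAmem v he1) (hgBmem v he2)

end Aux

/-- If Q is a path in a MNT graph G and the subgraph induced by V(Q) is not complete,
then some internal vertex of Q has a neighbour in G − V(Q). -/
theorem stmt_0 {V : Type*} [Fintype V] (G : SimpleGraph V)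
    (hG : MaxNontraceable G) {u v : V} (p : G.Walk u v) (hp : p.IsPath)
    (hnc : ¬ ∀ x ∈ p.support, ∀ y ∈ p.support, x ≠ y → G.Adj x y) :
    ∃ x ∈ p.support, x ≠ u ∧ x ≠ v ∧ ∃ w, G.Adj x w ∧ w ∉ p.support := by
  classical
  by_contra hcon
  push_neg at hcon
  push_neg at hnc
  obtain ⟨a, ha, b, hb, hab, hnadj⟩ := hnc
  set qs : List V := p.support with hqs
  have hqch : qs.Chain' G.Adj := p.isChain_adj_support
  have hqnd : qs.Nodup := hp.support_nodup
  have hqh : qs.head? = some u := by rw [hqs, p.support_eq_cons]; rfl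
  have hql : qs.getLast? = some v := by
    rw [← List.head?_reverse, hqs, ← Walk.support_reverse, p.reverse.support_eq_cons]
    rfl
  have huv : u ≠ v := by
    intro h
    have hsing : qs = [u] := eq_singleton_of_hl hqnd hqh (h ▸ hql)
    rw [hsing] at ha hb
    simp at ha hb
    exact hab (ha.trans hb.symm)
  have hTW : ∀ x ∈ qs, x ≠ u → x ≠ v → ∀ y, G.Adj x y → y ∈ qs := by
    intro x hx h1 h2 y hy
    exact hcon x hx h1 h2 y hy
  have killer : ∀ M : List V, M.Chain' G.Adj → M.Nodup → (∀ x, x ∈ M) → False := by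
    intro M hch hnd hall
    have hMne : M ≠ [] := by
      intro h
      have := hall u
      rw [h] at this
      simp at this
    exact hG.1 (traceable_of_list G M hMne hch hnd hall)
  have hW : ∃ w, w ∉ qs := by
    by_contra h
    push_neg at h
    exact hG.1 ⟨u, v, p, hp, fun w => h w⟩
  obtain ⟨s, t, P, hP, hPall⟩ := hG.2 a b hab hnadj
  set L : List V := P.support with hL
  have hLch : L.Chain' (G ⊔ edge a b).Adj := P.isChain_adj_support
  have hLnd : L.Nodup := hP.support_nodup
  rcases chain_split G a b L hLch with hLG | ⟨x, y, L1, L2, hLeq, hxy⟩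
  · exact killer L hLG hLnd fun z => hPall z
  · have hL2 : L = (L1 ++ [x]) ++ (y :: L2) := by rw [hLeq]; simp
    have hnd' : ((L1 ++ [x]) ++ (y :: L2)).Nodup := hL2 ▸ hLnd
    obtain ⟨hnd1, hnd2, hdis⟩ := List.nodup_append'.mp hnd'
    have hch' : ((L1 ++ [x]) ++ (y :: L2)).Chain' (G ⊔ edge a b).Adj := hL2 ▸ hLch
    obtain ⟨hc1', hc2', -⟩ := List.isChain_append.mp hch'
    have hynot1 : y ∉ L1 ++ [x] := fun hy => hdis hy (by simp)
    have hxnot2 : x ∉ y :: L2 := fun hx => hdis (by simp) hx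
    have hc1G : (L1 ++ [x]).Chain' G.Adj := by
      refine chain_of_not_mem G a b _ hc1' ?_
      rcases hxy with ⟨rfl, rfl⟩ | ⟨rfl, rfl⟩
      · exact Or.inr hynot1
      · exact Or.inl hynot1
    have hc2G : (y :: L2).Chain' G.Adj := by
      refine chain_of_not_mem G a b _ hc2' ?_
      rcases hxy with ⟨rfl, rfl⟩ | ⟨rfl, rfl⟩
      · exact Or.inl hxnot2
      · exact Or.inr hxnot2
    set A : List V := (L1 ++ [x]).reverse with hA
    set B : List V := y :: L2 with hB
    have hAch : A.Chain' G.Adj := chain'_rev hc1G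
    have hAnd : A.Nodup := List.nodup_reverse.mpr hnd1
    have hxqs : x ∈ qs := by
      rcases hxy with ⟨rfl, -⟩ | ⟨rfl, -⟩
      · exact ha
      · exact hb
    have hyqs : y ∈ qs := by
      rcases hxy with ⟨-, rfl⟩ | ⟨-, rfl⟩
      · exact hb
      · exact ha
    have hAh : ∀ z ∈ A.head?, z ∈ qs := by
      intro z hz
      rw [hA, List.head?_reverse, List.getLast?_concat] at hz
      have : z = x := by simpa using hz.symm
      subst this
      exact hxqs
    have hBh : ∀ z ∈ B.head?, z ∈ qs := by
      intro z hz
      have : z = y := by simpa [hB] using hz.symm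
      subst this
      exact hyqs
    have hdisjAB : ∀ z, z ∈ A → z ∈ B → False := by
      intro z hz hz'
      exact hdis (List.mem_reverse.mp hz) hz'
    have hcoverAB : ∀ z, z ∈ A ∨ z ∈ B := by
      intro z
      have hzL := hPall z
      rw [hL2] at hzL
      rcases List.mem_append.mp hzL with h | h
      · exact Or.inl (List.mem_reverse.mpr h)
      · exact Or.inr h
    exact core G u v qs hqch hqnd hqh hql huv hTW killer hW A B hAch hc2G hAnd hnd2
      hdisjAB hcoverAB hAh hBh
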